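/- arXiv:2506.12521 — 3 statements merged into one kernel-verified Lean document; each statement's English description precedes it below -/
import Mathlib

section
/- Let A₁, A₂ be C-hyperideals of commutative multiplicative hyperrings G₁, G₂ respectively, and S₁, S₂ multiplicative closed subsets of G₁, G₂. Then A₁ × A₂ is a quasi (S₁ × S₂)-primary hyperideal of G₁ × G₂ if and only if either S₁ ∩ A₁ ≠ ∅ and A₂ is a quasi S₂-primary hyperideal of G₂, or S₂ ∩ A₂ ≠ ∅ and A₁ is a quasi S₁-primary hyperideal of G₁. -/
open Set

/-- A commutative multiplicative hyperring: a commutative additive group with a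
commutative, associative hyperoperation `hmul` satisfying `(-a)∘b = -(a∘b)`,
weak distributivity, and having an identity element `e` with `a ∈ e∘a`. -/
class MulHyperring (G : Type*) extends AddCommGroup G where
  hmul : G → G → Set G
  hmul_nonempty : ∀ a b : G, (hmul a b).Nonempty
  hmul_comm : ∀ a b : G, hmul a b = hmul b a
  hmul_assoc : ∀ a b c : G, (⋃ x ∈ hmul a b, hmul x c) = ⋃ x ∈ hmul b c, hmul a x
  neg_hmul : ∀ a b : G, hmul (-a) b = (fun x => -x) '' (hmul a b)
  hmul_add : ∀ a b c : G,
    hmul a (b + c) ⊆ {x | ∃ u ∈ hmul a b, ∃ v ∈ hmul a c, x = u + v}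
  e : G
  e_mem : ∀ a : G, a ∈ hmul e a

namespace MulHyperring

variable {G : Type*} [MulHyperring G]

/-- Hyperproduct of an element with a set: `a ∘ B = ⋃ b ∈ B, a ∘ b`. -/
def smulSet (a : G) (B : Set G) : Set G := ⋃ b ∈ B, hmul a b

/-- Hyperproduct of two sets. -/
def setMul (A B : Set G) : Set G := ⋃ a ∈ A, ⋃ b ∈ B, hmul a b

/-- Hyperproduct `a₁ ∘ a₂ ∘ ⋯ ∘ aₙ` of a (nonempty) list of elements. -/
def hProd : List G → Set G
  | [] => ∅
  | [a] => {a}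
  | a :: b :: l => smulSet a (hProd (b :: l))

/-- `aⁿ` as a hyperproduct. -/
def hPow (a : G) (n : ℕ) : Set G := hProd (List.replicate n a)

/-- `A` is a hyperideal of `G`. -/
def IsHyperideal (A : Set G) : Prop :=
  A.Nonempty ∧ (∀ x ∈ A, ∀ y ∈ A, x - y ∈ A) ∧ ∀ r : G, ∀ x ∈ A, hmul r x ⊆ A

/-- `A` is a `C`-hyperideal: any finite hyperproduct meeting `A` is contained in `A`. -/
def IsCHyperideal (A : Set G) : Prop :=
  IsHyperideal A ∧ ∀ l : List G, l ≠ [] → (hProd l ∩ A).Nonempty → hProd l ⊆ A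

/-- The radical of a (C-)hyperideal: `{a | aⁿ ⊆ A for some n ≥ 1}`. -/
def rad (A : Set G) : Set G := {a | ∃ n : ℕ, 1 ≤ n ∧ hPow a n ⊆ A}

/-- The hyperideal generated by a set. -/
def idealGen (X : Set G) : Set G := ⋂₀ {A | IsHyperideal A ∧ X ⊆ A}

/-- The hyperideal product of two hyperideals. -/
def idealMul (A B : Set G) : Set G := idealGen (setMul A B)

/-- Multiplicative closed subset. -/
def IsMCS (S : Set G) : Prop :=
  e ∈ S ∧ ∀ s₁ ∈ S, ∀ s₂ ∈ S, (hmul s₁ s₂ ∩ S).Nonempty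

/-- Prime hyperideal. -/
def IsPrime (P : Set G) : Prop :=
  IsHyperideal P ∧ P ≠ univ ∧ ∀ x y : G, hmul x y ⊆ P → x ∈ P ∨ y ∈ P

/-- `S`-prime hyperideal. -/
def IsSPrime (S A : Set G) : Prop :=
  IsHyperideal A ∧ A ∩ S = ∅ ∧
    ∃ t ∈ S, ∀ u v : G, hmul u v ⊆ A → hmul t u ⊆ A ∨ hmul t v ⊆ A

/-- `S`-primary hyperideal. -/
def IsSPrimary (S A : Set G) : Prop :=
  IsHyperideal A ∧ A ∩ S = ∅ ∧
    ∃ t ∈ S, ∀ u v : G, hmul u v ⊆ A → hmul t u ⊆ A ∨ hmul t v ⊆ rad A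

/-- Quasi `S`-primary hyperideal. -/
def IsQuasiSPrimary (S A : Set G) : Prop :=
  IsHyperideal A ∧ A ∩ S = ∅ ∧
    ∃ t ∈ S, ∀ u v : G, hmul u v ⊆ A → hmul t u ⊆ rad A ∨ hmul t v ⊆ rad A

/-- Weakly quasi `S`-primary hyperideal. -/
def IsWeaklyQuasiSPrimary (S A : Set G) : Prop :=
  IsHyperideal A ∧ A ∩ S = ∅ ∧
    ∃ t ∈ S, ∀ u v : G, 0 ∉ hmul u v → hmul u v ⊆ A →
      hmul t u ⊆ rad A ∨ hmul t v ⊆ rad A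

/-- Strongly quasi `S`-primary hyperideal. -/
def IsStronglyQuasiSPrimary (S A : Set G) : Prop :=
  IsHyperideal A ∧ A ∩ S = ∅ ∧
    ∃ t ∈ S, ∀ u v : G, hmul u v ⊆ A →
      smulSet t (hPow u 2) ⊆ A ∨ hmul t v ⊆ rad A

/-- The residual `(B : x) = {y | y ∘ x ⊆ B}`. -/
def colon (B : Set G) (x : G) : Set G := {y | hmul y x ⊆ B}

end MulHyperring

namespace MulHyperring

variable {G₁ G₂ : Type*} [MulHyperring G₁] [MulHyperring G₂]

/-- The product of two commutative multiplicative hyperrings. -/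
instance prodMulHyperring : MulHyperring (G₁ × G₂) where
  hmul a b := (hmul a.1 b.1) ×ˢ (hmul a.2 b.2)
  hmul_nonempty a b := (hmul_nonempty a.1 b.1).prod (hmul_nonempty a.2 b.2)
  hmul_comm a b := by rw [hmul_comm a.1 b.1, hmul_comm a.2 b.2]
  hmul_assoc a b c := by
    ext x
    have h₁ := Set.ext_iff.mp (hmul_assoc a.1 b.1 c.1) x.1
    have h₂ := Set.ext_iff.mp (hmul_assoc a.2 b.2 c.2) x.2
    simp only [Set.mem_iUnion, Set.mem_prod, exists_prop] at *
    constructor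
    · rintro ⟨y, ⟨hy1, hy2⟩, hx1, hx2⟩
      obtain ⟨z₁, hz₁, hz₁'⟩ := h₁.mp ⟨y.1, hy1, hx1⟩
      obtain ⟨z₂, hz₂, hz₂'⟩ := h₂.mp ⟨y.2, hy2, hx2⟩
      exact ⟨(z₁, z₂), ⟨hz₁, hz₂⟩, hz₁', hz₂'⟩
    · rintro ⟨y, ⟨hy1, hy2⟩, hx1, hx2⟩
      obtain ⟨z₁, hz₁, hz₁'⟩ := h₁.mpr ⟨y.1, hy1, hx1⟩
      obtain ⟨z₂, hz₂, hz₂'⟩ := h₂.mpr ⟨y.2, hy2, hx2⟩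
      exact ⟨(z₁, z₂), ⟨hz₁, hz₂⟩, hz₁', hz₂'⟩
  neg_hmul a b := by
    ext x
    have h₁ := Set.ext_iff.mp (neg_hmul a.1 b.1) x.1
    have h₂ := Set.ext_iff.mp (neg_hmul a.2 b.2) x.2
    simp only [Set.mem_prod, Set.mem_image, Prod.fst_neg, Prod.snd_neg] at *
    constructor
    · rintro ⟨hx1, hx2⟩
      obtain ⟨u₁, hu₁, hu₁'⟩ := h₁.mp hx1
      obtain ⟨u₂, hu₂, hu₂'⟩ := h₂.mp hx2
      exact ⟨(u₁, u₂), ⟨hu₁, hu₂⟩, Prod.ext hu₁' hu₂'⟩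
    · rintro ⟨u, ⟨hu1, hu2⟩, hux⟩
      subst hux
      exact ⟨h₁.mpr ⟨u.1, hu1, rfl⟩, h₂.mpr ⟨u.2, hu2, rfl⟩⟩
  hmul_add a b c := by
    rintro ⟨x₁, x₂⟩ ⟨hx1, hx2⟩
    obtain ⟨u₁, hu₁, v₁, hv₁, h₁⟩ := hmul_add a.1 b.1 c.1 hx1
    obtain ⟨u₂, hu₂, v₂, hv₂, h₂⟩ := hmul_add a.2 b.2 c.2 hx2
    exact ⟨(u₁, u₂), ⟨hu₁, hu₂⟩, (v₁, v₂), ⟨hv₁, hv₂⟩, Prod.ext h₁ h₂⟩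
  e := (e, e)
  e_mem a := ⟨e_mem a.1, e_mem a.2⟩

end MulHyperring

namespace MulHyperring

section Aux

variable {G : Type*} [MulHyperring G]

lemma hPow_one' (a : G) : hPow a 1 = {a} := rfl

lemma hPow_succ' (a : G) {n : ℕ} (hn : 1 ≤ n) :
    hPow a (n + 1) = smulSet a (hPow a n) := by
  cases n with
  | zero => omega
  | succ m => rfl

lemma hPow_nonempty' (a : G) {n : ℕ} (hn : 1 ≤ n) : (hPow a n).Nonempty := by
  induction n, hn using Nat.le_induction with
  | base => exact ⟨a, rfl⟩
  | succ n hn ih =>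
    obtain ⟨x, hx⟩ := ih
    obtain ⟨y, hy⟩ := hmul_nonempty a x
    rw [hPow_succ' a hn]
    exact ⟨y, Set.mem_iUnion.2 ⟨x, Set.mem_iUnion.2 ⟨hx, hy⟩⟩⟩

lemma hPow_subset_of_le {A : Set G} (hA : IsHyperideal A) (a : G) {m n : ℕ}
    (h1 : 1 ≤ m) (hmn : m ≤ n) (hm : hPow a m ⊆ A) : hPow a n ⊆ A := by
  induction n, hmn using Nat.le_induction with
  | base => exact hm
  | succ n hn ih =>
    rw [hPow_succ' a (le_trans h1 hn)]
    rintro x hx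
    simp only [smulSet, Set.mem_iUnion] at hx
    obtain ⟨b, hb, hx⟩ := hx
    exact hA.2.2 a b (ih hb) hx

lemma mem_rad_of_mem {A : Set G} {a : G} (ha : a ∈ A) : a ∈ rad A :=
  ⟨1, le_refl 1, by rw [hPow_one']; simpa⟩

lemma mcs_pow {S : Set G} (hS : IsMCS S) {t : G} (ht : t ∈ S) {n : ℕ} (hn : 1 ≤ n) :
    (hPow t n ∩ S).Nonempty := by
  induction n, hn using Nat.le_induction with
  | base => exact ⟨t, rfl, ht⟩
  | succ n hn ih =>
    obtain ⟨x, hx, hxS⟩ := ih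
    obtain ⟨y, hy, hyS⟩ := hS.2 t ht x hxS
    refine ⟨y, ?_, hyS⟩
    rw [hPow_succ' t hn]
    exact Set.mem_iUnion.2 ⟨x, Set.mem_iUnion.2 ⟨hx, hy⟩⟩

lemma rad_inter_empty {A S : Set G} (hA : IsHyperideal A) (hS : IsMCS S)
    (hAS : A ∩ S = ∅) {t : G} (ht : t ∈ S) : t ∉ rad A := by
  rintro ⟨n, hn, hPn⟩
  obtain ⟨x, hx, hxS⟩ := mcs_pow hS ht hn
  exact absurd (Set.mem_inter (hPn hx) hxS) (by rw [hAS]; exact id)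

end Aux

section Prod

variable {G₁ G₂ : Type*} [MulHyperring G₁] [MulHyperring G₂]

lemma prod_hmul (a b : G₁ × G₂) :
    hmul a b = hmul a.1 b.1 ×ˢ hmul a.2 b.2 := rfl

lemma prod_smulSet (a : G₁ × G₂) (X : Set G₁) (Y : Set G₂) :
    smulSet a (X ×ˢ Y) = smulSet a.1 X ×ˢ smulSet a.2 Y := by
  ext ⟨x, y⟩
  simp only [smulSet, Set.mem_iUnion, Set.mem_prod, prod_hmul, exists_prop]
  constructor
  · rintro ⟨⟨b₁, b₂⟩, ⟨hb₁, hb₂⟩, hx, hy⟩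
    exact ⟨⟨b₁, hb₁, hx⟩, ⟨b₂, hb₂, hy⟩⟩
  · rintro ⟨⟨b₁, hb₁, hx⟩, ⟨b₂, hb₂, hy⟩⟩
    exact ⟨(b₁, b₂), ⟨hb₁, hb₂⟩, hx, hy⟩

lemma prod_hPow (a : G₁ × G₂) {n : ℕ} (hn : 1 ≤ n) :
    hPow a n = hPow a.1 n ×ˢ hPow a.2 n := by
  induction n, hn using Nat.le_induction with
  | base => rw [hPow_one', hPow_one', hPow_one', Set.singleton_prod_singleton]
  | succ n hn ih =>
    rw [hPow_succ' a hn, hPow_succ' a.1 hn, hPow_succ' a.2 hn, ih, prod_smulSet]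

lemma rad_prod {A₁ : Set G₁} {A₂ : Set G₂}
    (h₁ : IsHyperideal A₁) (h₂ : IsHyperideal A₂) :
    rad (A₁ ×ˢ A₂) = rad A₁ ×ˢ rad A₂ := by
  ext ⟨a, b⟩
  constructor
  · rintro ⟨n, hn, hP⟩
    rw [prod_hPow _ hn] at hP
    have hne₁ := hPow_nonempty' a hn
    have hne₂ := hPow_nonempty' b hn
    constructor
    · refine ⟨n, hn, fun x hx => ?_⟩
      obtain ⟨y, hy⟩ := hne₂
      exact (hP (Set.mk_mem_prod hx hy)).1
    · refine ⟨n, hn, fun y hy => ?_⟩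
      obtain ⟨x, hx⟩ := hne₁
      exact (hP (Set.mk_mem_prod hx hy)).2
  · rintro ⟨⟨n₁, hn₁, hP₁⟩, ⟨n₂, hn₂, hP₂⟩⟩
    refine ⟨max n₁ n₂, le_trans hn₁ (le_max_left _ _), ?_⟩
    rw [prod_hPow _ (le_trans hn₁ (le_max_left _ _))]
    exact Set.prod_mono
      (hPow_subset_of_le h₁ a hn₁ (le_max_left _ _) hP₁)
      (hPow_subset_of_le h₂ b hn₂ (le_max_right _ _) hP₂)

lemma prod_hyperideal {A₁ : Set G₁} {A₂ : Set G₂}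
    (h₁ : IsHyperideal A₁) (h₂ : IsHyperideal A₂) : IsHyperideal (A₁ ×ˢ A₂) := by
  obtain ⟨⟨a₁, ha₁⟩, hsub₁, habs₁⟩ := h₁
  obtain ⟨⟨a₂, ha₂⟩, hsub₂, habs₂⟩ := h₂
  refine ⟨⟨(a₁, a₂), ha₁, ha₂⟩, ?_, ?_⟩
  · rintro ⟨x₁, x₂⟩ ⟨hx₁, hx₂⟩ ⟨y₁, y₂⟩ ⟨hy₁, hy₂⟩
    exact ⟨hsub₁ x₁ hx₁ y₁ hy₁, hsub₂ x₂ hx₂ y₂ hy₂⟩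
  · rintro ⟨r₁, r₂⟩ ⟨x₁, x₂⟩ ⟨hx₁, hx₂⟩ ⟨z₁, z₂⟩ ⟨hz₁, hz₂⟩
    exact ⟨habs₁ r₁ x₁ hx₁ hz₁, habs₂ r₂ x₂ hx₂ hz₂⟩

end Prod

end MulHyperring
open MulHyperring in
theorem quasiSPrimary_prod {G₁ G₂ : Type*} [MulHyperring G₁] [MulHyperring G₂]
    (A₁ S₁ : Set G₁) (A₂ S₂ : Set G₂) (hA₁ : IsCHyperideal A₁) (hA₂ : IsCHyperideal A₂)
    (hS₁ : IsMCS S₁) (hS₂ : IsMCS S₂) :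
    IsQuasiSPrimary (S₁ ×ˢ S₂) (A₁ ×ˢ A₂) ↔
      ((S₁ ∩ A₁).Nonempty ∧ IsQuasiSPrimary S₂ A₂) ∨
      ((S₂ ∩ A₂).Nonempty ∧ IsQuasiSPrimary S₁ A₁) := by
  have hrad : rad (A₁ ×ˢ A₂) = rad A₁ ×ˢ rad A₂ := rad_prod hA₁.1 hA₂.1
  constructor
  · rintro ⟨-, hdisj, ⟨t₁, t₂⟩, ⟨ht₁, ht₂⟩, hq⟩
    -- first show one of the intersections is nonempty
    obtain ⟨a₁, ha₁⟩ := hA₁.1.1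
    obtain ⟨a₂, ha₂⟩ := hA₂.1.1
    have key : (S₁ ∩ A₁).Nonempty ∨ (S₂ ∩ A₂).Nonempty := by
      have huv : hmul ((e : G₁), a₂) (a₁, (e : G₂)) ⊆ A₁ ×ˢ A₂ := by
        rintro ⟨x, y⟩ ⟨hx, hy⟩
        refine ⟨hA₁.1.2.2 e a₁ ha₁ hx, ?_⟩
        rw [hmul_comm] at hy
        exact hA₂.1.2.2 e a₂ ha₂ hy
      rcases hq _ _ huv with h | h
      · rw [hrad] at h
        obtain ⟨y, hy⟩ := hmul_nonempty t₂ a₂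
        have ht₁rad : t₁ ∈ rad A₁ := by
          have := h (a := (t₁, y)) ⟨by rw [hmul_comm]; exact e_mem t₁, hy⟩
          exact this.1
        obtain ⟨n, hn, hPn⟩ := ht₁rad
        obtain ⟨x, hx, hxS⟩ := mcs_pow hS₁ ht₁ hn
        exact Or.inl ⟨x, hxS, hPn hx⟩
      · rw [hrad] at h
        obtain ⟨x, hx⟩ := hmul_nonempty t₁ a₁
        have ht₂rad : t₂ ∈ rad A₂ := by
          have := h (a := (x, t₂)) ⟨hx, by rw [hmul_comm]; exact e_mem t₂⟩
          exact this.2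
        obtain ⟨n, hn, hPn⟩ := ht₂rad
        obtain ⟨y, hy, hyS⟩ := mcs_pow hS₂ ht₂ hn
        exact Or.inr ⟨y, hyS, hPn hy⟩
    rcases key with ⟨s₁, hs₁S, hs₁A⟩ | ⟨s₂, hs₂S, hs₂A⟩
    · -- S₁ ∩ A₁ nonempty : show A₂ quasi S₂-primary
      refine Or.inl ⟨⟨s₁, hs₁S, hs₁A⟩, hA₂.1, ?_, t₂, ht₂, ?_⟩
      · ext y
        simp only [Set.mem_inter_iff, Set.mem_empty_iff_false, iff_false, not_and]
        intro hyA hyS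
        exact absurd (Set.ext_iff.mp hdisj (s₁, y))
          (by simp [hs₁A, hyA, hs₁S, hyS])
      · intro u v huv
        have huv' : hmul ((s₁, u) : G₁ × G₂) (s₁, v) ⊆ A₁ ×ˢ A₂ := by
          rintro ⟨x, y⟩ ⟨hx, hy⟩
          exact ⟨hA₁.1.2.2 s₁ s₁ hs₁A hx, huv hy⟩
        rcases hq _ _ huv' with h | h <;> rw [hrad] at h
        · left
          intro y hy
          obtain ⟨x, hx⟩ := hmul_nonempty t₁ s₁
          exact (h (a := (x, y)) ⟨hx, hy⟩).2
        · right
          intro y hy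
          obtain ⟨x, hx⟩ := hmul_nonempty t₁ s₁
          exact (h (a := (x, y)) ⟨hx, hy⟩).2
    · -- S₂ ∩ A₂ nonempty : show A₁ quasi S₁-primary
      refine Or.inr ⟨⟨s₂, hs₂S, hs₂A⟩, hA₁.1, ?_, t₁, ht₁, ?_⟩
      · ext x
        simp only [Set.mem_inter_iff, Set.mem_empty_iff_false, iff_false, not_and]
        intro hxA hxS
        exact absurd (Set.ext_iff.mp hdisj (x, s₂))
          (by simp [hs₂A, hxA, hs₂S, hxS])
      · intro u v huv
        have huv' : hmul ((u, s₂) : G₁ × G₂) (v, s₂) ⊆ A₁ ×ˢ A₂ := by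
          rintro ⟨x, y⟩ ⟨hx, hy⟩
          exact ⟨huv hx, hA₂.1.2.2 s₂ s₂ hs₂A hy⟩
        rcases hq _ _ huv' with h | h <;> rw [hrad] at h
        · left
          intro x hx
          obtain ⟨y, hy⟩ := hmul_nonempty t₂ s₂
          exact (h (a := (x, y)) ⟨hx, hy⟩).1
        · right
          intro x hx
          obtain ⟨y, hy⟩ := hmul_nonempty t₂ s₂
          exact (h (a := (x, y)) ⟨hx, hy⟩).1
  · rintro (⟨⟨s₁, hs₁S, hs₁A⟩, hI₂, hdisj₂, t₂, ht₂, hq₂⟩ |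
            ⟨⟨s₂, hs₂S, hs₂A⟩, hI₁, hdisj₁, t₁, ht₁, hq₁⟩)
    · refine ⟨prod_hyperideal hA₁.1 hI₂, ?_, (s₁, t₂), ⟨hs₁S, ht₂⟩, ?_⟩
      · ext ⟨x, y⟩
        simp only [Set.mem_inter_iff, Set.mem_prod, Set.mem_empty_iff_false, iff_false]
        rintro ⟨⟨-, hyA⟩, -, hyS⟩
        exact absurd (Set.ext_iff.mp hdisj₂ y) (by simp [hyA, hyS])
      · rintro ⟨u₁, u₂⟩ ⟨v₁, v₂⟩ huv
        have hne₁ := hmul_nonempty u₁ v₁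
        have h₂ : hmul u₂ v₂ ⊆ A₂ := by
          intro y hy
          obtain ⟨x, hx⟩ := hne₁
          exact (huv (Set.mk_mem_prod hx hy)).2
        have hs₁u : ∀ w : G₁, hmul s₁ w ⊆ rad A₁ := by
          intro w y hy
          rw [hmul_comm] at hy
          exact mem_rad_of_mem (hA₁.1.2.2 w s₁ hs₁A hy)
        rcases hq₂ u₂ v₂ h₂ with h | h
        · left; rw [hrad]; exact Set.prod_mono (hs₁u u₁) h
        · right; rw [hrad]; exact Set.prod_mono (hs₁u v₁) h
    · refine ⟨prod_hyperideal hI₁ hA₂.1, ?_, (t₁, s₂), ⟨ht₁, hs₂S⟩, ?_⟩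
      · ext ⟨x, y⟩
        simp only [Set.mem_inter_iff, Set.mem_prod, Set.mem_empty_iff_false, iff_false]
        rintro ⟨⟨hxA, -⟩, hxS, -⟩
        exact absurd (Set.ext_iff.mp hdisj₁ x) (by simp [hxA, hxS])
      · rintro ⟨u₁, u₂⟩ ⟨v₁, v₂⟩ huv
        have hne₂ := hmul_nonempty u₂ v₂
        have h₁ : hmul u₁ v₁ ⊆ A₁ := by
          intro x hx
          obtain ⟨y, hy⟩ := hne₂
          exact (huv (Set.mk_mem_prod hx hy)).1
        have hs₂u : ∀ w : G₂, hmul s₂ w ⊆ rad A₂ := by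
          intro w y hy
          rw [hmul_comm] at hy
          exact mem_rad_of_mem (hA₂.1.2.2 w s₂ hs₂A hy)
        rcases hq₁ u₁ v₁ h₁ with h | h
        · left; rw [hrad]; exact Set.prod_mono h (hs₂u u₂)
        · right; rw [hrad]; exact Set.prod_mono h (hs₂u v₂)
end

section
/- Let A be a C-hyperideal of a commutative multiplicative hyperring G and S an MCS with A ∩ S = ∅. Then A is a strongly quasi S-primary hyperideal of G if and only if there exists t ∈ S such that for every u ∈ G, either u² ⊆ (A : t) or (A : u) ⊆ (rad(A) : t). -/
open Set

open MulHyperring in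
theorem stronglyQuasiSPrimary_iff_colon {G : Type*} [MulHyperring G] (A S : Set G) (hA : IsCHyperideal A)
    (hS : IsMCS S) (hAS : A ∩ S = ∅) :
    IsStronglyQuasiSPrimary S A ↔
      ∃ t ∈ S, ∀ u : G, hPow u 2 ⊆ colon A t ∨ colon A u ⊆ colon (rad A) t := by
  have key : ∀ t : G, ∀ X : Set G, smulSet t X ⊆ A ↔ X ⊆ colon A t := by
    intro t X
    constructor
    · intro h x hx y hy
      exact h (by
        simp only [smulSet, mem_iUnion]
        exact ⟨x, hx, by rwa [hmul_comm] at hy⟩)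
    · intro h y hy
      simp only [smulSet, mem_iUnion] at hy
      obtain ⟨x, hx, hyx⟩ := hy
      exact h hx (by rwa [hmul_comm t x] at hyx)
  constructor
  · rintro ⟨_, _, t, ht, hmain⟩
    refine ⟨t, ht, fun u => ?_⟩
    by_cases hu : hPow u 2 ⊆ colon A t
    · exact Or.inl hu
    · right
      intro v hv
      rcases hmain u v (fun y hy => hv (by rwa [hmul_comm] at hy)) with h | h
      · exact absurd ((key t _).1 h) hu
      · intro y hy; exact h (by rwa [hmul_comm] at hy)
  · rintro ⟨t, ht, hmain⟩
    refine ⟨hA.1, hAS, t, ht, fun u v huv => ?_⟩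
    rcases hmain u with h | h
    · exact Or.inl ((key t _).2 h)
    · right
      have hv : v ∈ colon A u := fun y hy => huv (by rwa [hmul_comm] at hy)
      have hv2 := h hv
      intro y hy; exact hv2 (by rwa [hmul_comm] at hy)
end

section
/- Let G₁, G₂ be commutative multiplicative hyperrings, η : G₁ → G₂ a surjective hyperring good homomorphism, A₁ a C-hyperideal of G₁ with Ker(η) ⊆ A₁, and S an MCS of G₁ with 0 ∉ η(S). If A₁ is a strongly quasi S-primary hyperideal of G₁, then η(A₁) is a strongly quasi η(S)-primary hyperideal of G₂. -/
open Set

namespace MulHyperring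

/-- A hyperring good homomorphism. -/
structure IsGoodHom {G₁ G₂ : Type*} [MulHyperring G₁] [MulHyperring G₂]
    (η : G₁ → G₂) : Prop where
  map_add : ∀ a b : G₁, η (a + b) = η a + η b
  map_hmul : ∀ a b : G₁, η '' (hmul a b) = hmul (η a) (η b)
  map_e : η (e : G₁) = (e : G₂)

end MulHyperring

namespace MulHyperring

variable {G₁ G₂ : Type*} [MulHyperring G₁] [MulHyperring G₂] {η : G₁ → G₂}

lemma IsGoodHom.map_zero' (hη : IsGoodHom η) : η 0 = 0 := by
  have h := hη.map_add 0 0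
  rw [add_zero] at h
  exact (add_left_cancel (h.symm.trans (add_zero _).symm))

lemma IsGoodHom.map_neg' (hη : IsGoodHom η) (x : G₁) : η (-x) = -η x := by
  have h : η x + η (-x) = 0 := by
    rw [← hη.map_add, add_neg_cancel, hη.map_zero']
  exact eq_neg_of_add_eq_zero_right h

lemma IsGoodHom.map_sub' (hη : IsGoodHom η) (x y : G₁) : η (x - y) = η x - η y := by
  rw [sub_eq_add_neg, hη.map_add, hη.map_neg', ← sub_eq_add_neg]

lemma IsGoodHom.image_smulSet (hη : IsGoodHom η) (a : G₁) (B : Set G₁) :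
    η '' smulSet a B = smulSet (η a) (η '' B) := by
  unfold smulSet
  rw [Set.biUnion_image, Set.image_iUnion₂]
  exact Set.iUnion₂_congr fun b _ => hη.map_hmul a b

lemma IsGoodHom.image_hProd (hη : IsGoodHom η) :
    ∀ l : List G₁, l ≠ [] → η '' hProd l = hProd (l.map η)
  | [], hl => absurd rfl hl
  | [a], _ => by simp [hProd]
  | a :: b :: l, _ => by
    show η '' smulSet a (hProd (b :: l)) = smulSet (η a) (hProd ((b :: l).map η))
    rw [hη.image_smulSet, hη.image_hProd (b :: l) (by simp)]

lemma IsGoodHom.image_hPow (hη : IsGoodHom η) (a : G₁) (n : ℕ) (hn : 1 ≤ n) :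
    η '' hPow a n = hPow (η a) n := by
  unfold hPow
  rw [hη.image_hProd _ (by cases n with | zero => omega | succ m => simp [List.replicate]),
    List.map_replicate]

lemma IsGoodHom.image_rad_subset (hη : IsGoodHom η) (A : Set G₁) :
    η '' rad A ⊆ rad (η '' A) := by
  rintro _ ⟨a, ⟨n, hn, hpow⟩, rfl⟩
  exact ⟨n, hn, by rw [← hη.image_hPow a n hn]; exact Set.image_mono (f := η) hpow⟩

lemma mem_of_ker_subset (hη : IsGoodHom η) {A : Set G₁} (hA : IsHyperideal A)
    (hker : {x : G₁ | η x = 0} ⊆ A) {w : G₁} (hw : η w ∈ η '' A) : w ∈ A := by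
  obtain ⟨a, ha, haw⟩ := hw
  have h0 : (0 : G₁) ∈ A := by
    obtain ⟨x, hx⟩ := hA.1
    simpa using hA.2.1 x hx x hx
  have hwa : w - a ∈ A := hker (by simp [hη.map_sub', haw])
  have hna : -a ∈ A := by simpa using hA.2.1 0 h0 a ha
  have := hA.2.1 (w - a) hwa (-a) hna
  simpa [sub_neg_eq_add, sub_add_cancel] using this

end MulHyperring

open MulHyperring in
theorem stronglyQuasiSPrimary_image {G₁ G₂ : Type*} [MulHyperring G₁] [MulHyperring G₂]
    (η : G₁ → G₂) (hη : IsGoodHom η) (hsurj : Function.Surjective η)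
    (A₁ : Set G₁) (hA₁ : IsCHyperideal A₁) (hker : {x : G₁ | η x = 0} ⊆ A₁)
    (S : Set G₁) (hS : IsMCS S) (h0 : (0 : G₂) ∉ η '' S)
    (h : IsStronglyQuasiSPrimary S A₁) :
    IsStronglyQuasiSPrimary (η '' S) (η '' A₁) := by
  obtain ⟨hI, hdisj, t, htS, ht⟩ := h
  refine ⟨⟨hI.1.image η, ?_, ?_⟩, ?_, η t, ⟨t, htS, rfl⟩, ?_⟩
  · rintro _ ⟨x, hx, rfl⟩ _ ⟨y, hy, rfl⟩
    exact ⟨x - y, hI.2.1 x hx y hy, hη.map_sub' x y⟩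
  · intro r x hx
    obtain ⟨r', rfl⟩ := hsurj r
    obtain ⟨a, ha, rfl⟩ := hx
    rw [← hη.map_hmul]
    exact Set.image_mono (f := η) (hI.2.2 r' a ha)
  · rw [Set.eq_empty_iff_forall_notMem]
    rintro x ⟨⟨a, ha, rfl⟩, s, hsS, hsa⟩
    have hsA : s ∈ A₁ := mem_of_ker_subset hη hI hker ⟨a, ha, hsa.symm⟩
    have : s ∈ A₁ ∩ S := ⟨hsA, hsS⟩
    rw [hdisj] at this
    exact this
  · intro u v huv
    obtain ⟨u', rfl⟩ := hsurj u
    obtain ⟨v', rfl⟩ := hsurj v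
    have hsub : hmul u' v' ⊆ A₁ := by
      intro w hw
      exact mem_of_ker_subset hη hI hker (huv (by rw [← hη.map_hmul]; exact ⟨w, hw, rfl⟩))
    rcases ht u' v' hsub with h1 | h2
    · left
      rw [← hη.image_hPow u' 2 (by norm_num), ← hη.image_smulSet]
      exact Set.image_mono (f := η) h1
    · right
      rw [← hη.map_hmul]
      exact (Set.image_mono (f := η) h2).trans (hη.image_rad_subset A₁)
end
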